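/- On Hom_c(π, 𝔬*), for π as above (extension of ẑⁿ by a finite discrete group), the topology of uniform convergence coincides with the topology of pointwise convergence. -/

import Mathlib

noncomputable section

instance (n : ℕ) : TopologicalSpace (ZMod n) := ⊥
instance (n : ℕ) : DiscreteTopology (ZMod n) := ⟨rfl⟩
instance (n : ℕ) : ContinuousAdd (ZMod n) := ⟨continuous_of_discreteTopology⟩
instance (n : ℕ) : ContinuousNeg (ZMod n) := ⟨continuous_of_discreteTopology⟩

/-- The profinite completion `ẑ` of `ℤ`, realized as compatible families in `∏ ZMod n`. -/
def ZHat : Type :=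
  {f : (n : ℕ+) → ZMod (n : ℕ) // ∀ (m n : ℕ+) (h : (m : ℕ) ∣ (n : ℕ)),
    ZMod.castHom h (ZMod (m : ℕ)) (f n) = f m}

namespace ZHat

instance : Zero ZHat := ⟨⟨fun _ => 0, fun _ _ _ => map_zero _⟩⟩
instance : One ZHat := ⟨⟨fun _ => 1, fun _ _ _ => map_one _⟩⟩
instance : Add ZHat :=
  ⟨fun a b => ⟨fun n => a.1 n + b.1 n, fun m n h => by rw [map_add, a.2 m n h, b.2 m n h]⟩⟩
instance : Neg ZHat :=
  ⟨fun a => ⟨fun n => -a.1 n, fun m n h => by rw [map_neg, a.2 m n h]⟩⟩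
instance : Sub ZHat :=
  ⟨fun a b => ⟨fun n => a.1 n - b.1 n, fun m n h => by rw [map_sub, a.2 m n h, b.2 m n h]⟩⟩
instance : SMul ℕ ZHat :=
  ⟨fun k a => ⟨fun n => k • a.1 n, fun m n h => by rw [map_nsmul, a.2 m n h]⟩⟩
instance : SMul ℤ ZHat :=
  ⟨fun k a => ⟨fun n => k • a.1 n, fun m n h => by rw [map_zsmul, a.2 m n h]⟩⟩

instance : AddCommGroup ZHat :=
  Function.Injective.addCommGroup (fun f : ZHat => (f.1 : (n : ℕ+) → ZMod (n : ℕ)))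
    Subtype.coe_injective rfl (fun _ _ => rfl) (fun _ => rfl) (fun _ _ => rfl)
    (fun _ _ => rfl) (fun _ _ => rfl)

instance : TopologicalSpace ZHat := instTopologicalSpaceSubtype

lemma continuous_eval (n : ℕ+) : Continuous fun a : ZHat => a.1 n :=
  (continuous_apply n).comp continuous_subtype_val

instance : ContinuousAdd ZHat :=
  ⟨Continuous.subtype_mk (continuous_pi fun n =>
    (((continuous_eval n).comp continuous_fst).add ((continuous_eval n).comp continuous_snd))) _⟩

instance : ContinuousNeg ZHat :=
  ⟨Continuous.subtype_mk (continuous_pi fun n => (continuous_eval n).neg) _⟩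

instance : IsTopologicalAddGroup ZHat :=
  { continuous_add := continuous_add, continuous_neg := continuous_neg }

instance : CompactSpace ZHat := by
  have hc : IsClosed {f : (n : ℕ+) → ZMod (n : ℕ) | ∀ (m n : ℕ+) (h : (m : ℕ) ∣ (n : ℕ)),
      ZMod.castHom h (ZMod (m : ℕ)) (f n) = f m} := by
    have : {f : (n : ℕ+) → ZMod (n : ℕ) | ∀ (m n : ℕ+) (h : (m : ℕ) ∣ (n : ℕ)),
        ZMod.castHom h (ZMod (m : ℕ)) (f n) = f m} =
        ⋂ (m : ℕ+) (n : ℕ+) (h : (m : ℕ) ∣ (n : ℕ)),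
          {f : (n : ℕ+) → ZMod (n : ℕ) | ZMod.castHom h (ZMod (m : ℕ)) (f n) = f m} := by
      ext f; simp [Set.mem_iInter]
    rw [this]
    exact isClosed_iInter fun m => isClosed_iInter fun n => isClosed_iInter fun h =>
      isClosed_eq (continuous_of_discreteTopology.comp (continuous_apply n)) (continuous_apply m)
  exact isCompact_iff_compactSpace.mp hc.isCompact

end ZHat
open Topology Filter
instance : T2Space ZHat :=
  inferInstanceAs (T2Space {f : (n : ℕ+) → ZMod (n : ℕ) // ∀ (m n : ℕ+) (h : (m : ℕ) ∣ (n : ℕ)),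
    ZMod.castHom h (ZMod (m : ℕ)) (f n) = f m})
example : T2Space (Fin 3 → ZHat) := inferInstance
lemma ZHat.denseRange_nsmul_one : DenseRange (fun k : ℕ => k • (1 : ZHat)) := by
  rw [denseRange_iff_closure_range, ← Set.univ_subset_iff]
  intro x _
  rw [mem_closure_iff]
  intro U hU hxU
  obtain ⟨V, hV, rfl⟩ := isOpen_induced_iff.mp hU
  obtain ⟨I, u, h1, h2⟩ := isOpen_pi_iff.mp hV x.1 hxU
  have hNpos : 0 < ∏ m ∈ I, (m : ℕ) := Finset.prod_pos fun m _ => m.pos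
  set N : ℕ+ := ⟨∏ m ∈ I, (m : ℕ), hNpos⟩ with hN
  haveI : NeZero (N : ℕ) := ⟨hNpos.ne'⟩
  set k : ℕ := (x.1 N).val with hk
  refine ⟨k • (1 : ZHat), ?_, ⟨k, rfl⟩⟩
  refine h2 ?_
  intro m hm
  have hdvd : (m : ℕ) ∣ (N : ℕ) := Finset.dvd_prod_of_mem _ hm
  have hcoord : ((k • (1 : ZHat)).1 m) = x.1 m := by
    have h3 : ((k • (1 : ZHat)).1 m) = (k : ZMod (m : ℕ)) := by
      show k • (1 : ZMod (m : ℕ)) = (k : ZMod (m : ℕ))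
      simp
    rw [h3, hk, ZMod.natCast_val, ← ZMod.castHom_apply (h := hdvd), x.2 m N hdvd]
  rw [hcoord]
  exact (h1 m hm).2
lemma dense_closure_singles (n : ℕ) :
    Dense (↑(AddSubgroup.closure
      (Set.range fun i : Fin n => Pi.single i (1 : ZHat))) : Set (Fin n → ZHat)) := by
  have hpi : Dense (Set.pi Set.univ fun _ : Fin n => Set.range fun k : ℕ => k • (1 : ZHat)) :=
    dense_pi Set.univ fun i _ => ZHat.denseRange_nsmul_one
  refine hpi.mono ?_
  intro h hh
  have : h = ∑ i : Fin n, Pi.single i (h i) := (Finset.univ_sum_single h).symm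
  rw [this]
  refine AddSubgroup.sum_mem _ fun i _ => ?_
  obtain ⟨k, hk⟩ := hh i (Set.mem_univ i)
  rw [← hk]
  show (Pi.single i (k • (1:ZHat)) : Fin n → ZHat) ∈ _
  rw [Pi.single_smul]
  exact AddSubgroup.nsmul_mem _ (AddSubgroup.subset_closure (Set.mem_range_self i)) k
lemma char_bound {K : Type*} [NormedField K] (hna : IsNonarchimedean fun x : K => ‖x‖)
    {π : Type*} [AddCommGroup π] [TopologicalSpace π]
    (f g : π → K) (hfc : Continuous f) (hgc : Continuous g)
    (hf : ∀ a b, f (a + b) = f a * f b) (hnf : ∀ a, ‖f a‖ = 1)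
    (hg : ∀ a b, g (a + b) = g a * g b) (hng : ∀ a, ‖g a‖ = 1)
    {S : Set π} (hdense : Dense (↑(AddSubgroup.closure S) : Set π))
    {ε : ℝ} (hε : 0 ≤ ε) (hS : ∀ t ∈ S, ‖g t - f t‖ ≤ ε) :
    ∀ x, ‖g x - f x‖ ≤ ε := by
  have fne : ∀ x, f x ≠ 0 := fun x h0 => by simpa [h0] using hnf x
  have gne : ∀ x, g x ≠ 0 := fun x h0 => by simpa [h0] using hng x
  have hf0 : f 0 = 1 := by
    have h := hf 0 0
    rw [add_zero] at h
    have h2 : f 0 * f 0 = f 0 * 1 := by rw [← h, mul_one]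
    exact mul_left_cancel₀ (fne 0) h2
  have hg0 : g 0 = 1 := by
    have h := hg 0 0
    rw [add_zero] at h
    have h2 : g 0 * g 0 = g 0 * 1 := by rw [← h, mul_one]
    exact mul_left_cancel₀ (gne 0) h2
  have fneg : ∀ x, f (-x) = (f x)⁻¹ := by
    intro x
    have h := hf x (-x)
    rw [add_neg_cancel, hf0] at h
    exact eq_inv_of_mul_eq_one_left (by rw [mul_comm, ← h])
  have gneg : ∀ x, g (-x) = (g x)⁻¹ := by
    intro x
    have h := hg x (-x)
    rw [add_neg_cancel, hg0] at h
    exact eq_inv_of_mul_eq_one_left (by rw [mul_comm, ← h])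
  set D : AddSubgroup π :=
  { carrier := {x | ‖g x - f x‖ ≤ ε}
    zero_mem' := by simp [hf0, hg0, hε]
    add_mem' := by
      intro a b ha hb
      simp only [Set.mem_setOf_eq] at ha hb ⊢
      have hab : g (a + b) - f (a + b) = g a * (g b - f b) + (g a - f a) * f b := by
        rw [hf, hg]; ring
      rw [hab]
      refine le_trans (hna _ _) (max_le ?_ ?_)
      · simpa only [norm_mul, hng, one_mul] using hb
      · simpa only [norm_mul, hnf, mul_one] using ha
    neg_mem' := by
      intro a ha
      simp only [Set.mem_setOf_eq] at ha ⊢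
      rw [fneg, gneg]
      have h : (g a)⁻¹ - (f a)⁻¹ = (f a - g a) * ((g a) * (f a))⁻¹ := by
        rw [inv_sub_inv (gne a) (fne a), div_eq_mul_inv]
      rw [h, norm_mul, norm_inv, norm_mul, hnf, hng, one_mul, inv_one, mul_one,
        norm_sub_rev]
      exact ha } with hD
  have hDc : IsClosed (D : Set π) := isClosed_le ((hgc.sub hfc).norm) continuous_const
  have hle : AddSubgroup.closure S ≤ D := (AddSubgroup.closure_le D).mpr hS
  intro x
  have hx : x ∈ closure (↑(AddSubgroup.closure S) : Set π) := hdense x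
  exact closure_minimal hle hDc hx

theorem homc_uniform_eq_pointwise
    (p : ℕ) [Fact (Nat.Prime p)]
    (K : Type) [NormedField K] [CompleteSpace K] [IsAlgClosed K] [CharZero K]
    (hna : IsNonarchimedean fun x : K => ‖x‖)
    (hp : ‖(p : K)‖ = (p : ℝ)⁻¹)
    (n : ℕ) (π : Type) [AddCommGroup π] [TopologicalSpace π] [IsTopologicalAddGroup π]
    [CompactSpace π]
    (q : π →+ (Fin n → ZHat)) (hqc : Continuous q) (hqs : Function.Surjective q)
    (hqopen : IsOpenMap q)
    (hker : ((AddMonoidHom.ker q : AddSubgroup π) : Set π).Finite) :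
    (instTopologicalSpaceSubtype :
        TopologicalSpace {f : C(π, K) // (∀ a b : π, f (a + b) = f a * f b) ∧
          ∀ a : π, ‖f a‖ = 1}) =
      TopologicalSpace.induced
        (fun f : {f : C(π, K) // (∀ a b : π, f (a + b) = f a * f b) ∧
          ∀ a : π, ‖f a‖ = 1} => (⇑f.1 : π → K))
        Pi.topologicalSpace := by
  classical
  -- choose preimages of the standard generators
  have he : ∀ i : Fin n, ∃ x : π, q x = Pi.single i 1 := fun i => hqs (Pi.single i 1)
  choose e hqe using he
  -- the topological generating set
  set S : Set π := (↑(AddMonoidHom.ker q) : Set π) ∪ Set.range e with hSdef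
  -- density of the subgroup generated by S
  have hdense : Dense (↑(AddSubgroup.closure S) : Set π) := by
    set G : AddSubgroup π := (AddSubgroup.closure S).topologicalClosure with hG
    have hGclosed : IsClosed (G : Set π) := AddSubgroup.isClosed_topologicalClosure _
    have hGle : AddSubgroup.closure S ≤ G := AddSubgroup.le_topologicalClosure _
    have hmapclosed : IsClosed (↑(AddSubgroup.map q G) : Set (Fin n → ZHat)) := by
      rw [AddSubgroup.coe_map]
      exact hqc.isClosedMap _ hGclosed
    have h1 : AddSubgroup.closure (Set.range fun i : Fin n => Pi.single i (1 : ZHat)) ≤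
        AddSubgroup.map q G := by
      rw [AddSubgroup.closure_le]
      rintro _ ⟨i, rfl⟩
      exact ⟨e i, hGle (AddSubgroup.subset_closure (Or.inr (Set.mem_range_self i))), hqe i⟩
    have h2 : Dense (↑(AddSubgroup.map q G) : Set (Fin n → ZHat)) :=
      (dense_closure_singles n).mono h1
    have h4 : (↑(AddSubgroup.map q G) : Set (Fin n → ZHat)) = Set.univ := by
      rw [← hmapclosed.closure_eq, h2.closure_eq]
    have h3 : ∀ y : Fin n → ZHat, y ∈ AddSubgroup.map q G := by
      intro y
      have hy : y ∈ (↑(AddSubgroup.map q G) : Set (Fin n → ZHat)) := by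
        rw [h4]; trivial
      exact hy
    have hGtop : ∀ x : π, x ∈ G := by
      intro x
      obtain ⟨c, hc, hcq⟩ := h3 (q x)
      have hker' : x - c ∈ AddMonoidHom.ker q := by
        rw [AddMonoidHom.mem_ker, map_sub, hcq, sub_self]
      have h4 : x - c ∈ G := hGle (AddSubgroup.subset_closure (Or.inl hker'))
      have h5 := G.add_mem h4 hc
      rwa [sub_add_cancel] at h5
    intro x
    have hx : x ∈ ((AddSubgroup.closure S).topologicalClosure : Set π) := hGtop x
    rwa [AddSubgroup.topologicalClosure_coe] at hx
  have hSfin : S.Finite := hker.union (Set.finite_range e)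
  -- the comparison
  apply le_antisymm
  · rw [← continuous_iff_le_induced]
    exact continuous_coeFun.comp continuous_subtype_val
  · set X := {f : C(π, K) // (∀ a b : π, f (a + b) = f a * f b) ∧ ∀ a : π, ‖f a‖ = 1}
    set tp : TopologicalSpace X := TopologicalSpace.induced
      (fun f : X => (⇑f.1 : π → K)) Pi.topologicalSpace with htp
    have hcont : @Continuous X C(π, K) tp _ Subtype.val := by
      rw [@continuous_iff_continuousAt _ _ tp _]
      intro f
      rw [ContinuousAt, Metric.tendsto_nhds]
      intro ε hε
      rw [htp, nhds_induced]
      have hev : ∀ᶠ h : π → K in 𝓝 ⇑f.1, ∀ t ∈ S, dist (h t) (f.1 t) < ε / 2 := by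
        rw [Filter.eventually_all_finite hSfin]
        intro t _
        exact Metric.tendsto_nhds.mp ((continuous_apply t).tendsto ⇑f.1) (ε / 2) (by positivity)
      refine Filter.mem_comap.mpr ⟨{h : π → K | ∀ t ∈ S, dist (h t) (f.1 t) < ε / 2}, hev, ?_⟩
      intro g hg
      have hb : ∀ x, ‖g.1 x - f.1 x‖ ≤ ε / 2 := by
        refine char_bound hna ⇑f.1 ⇑g.1 f.1.continuous g.1.continuous
          f.2.1 f.2.2 g.2.1 g.2.2 hdense (by positivity) ?_
        intro t ht
        exact le_of_lt (by simpa [dist_eq_norm] using hg t ht)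
      have hdle : dist (g : C(π, K)) (f : C(π, K)) ≤ ε / 2 :=
        (ContinuousMap.dist_le (by positivity)).mpr fun x => by
          rw [dist_eq_norm]; exact hb x
      exact lt_of_le_of_lt hdle (by linarith)
    exact continuous_iff_le_induced.mp hcont
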